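/- arXiv:1910.10571 — 2 statements merged into one kernel-verified Lean document; each statement's English description precedes it below -/
import Mathlib

section
/- There exists a universal constant c > 0 such that the following holds. Let k and r be reals with 2 ≤ k ≤ r, let C ≥ 1 and α > 1, let A ∈ ℝ^{n×m} and b ∈ ℝ^n. Suppose x₀ satisfies Ax₀ = b and ‖x₀‖_k^k ≤ C·‖x‖_k^k for every x with Ax = b; suppose the minimum of ‖x‖_r^r over {x : Ax = b} is attained at x*, and ‖x₀‖_r^r > α‖x*‖_r^r. Define the residual at x₀ by g_e = |x₀ₑ|^{r−2}x₀ₑ and r_e = |x₀ₑ|^{r−2}. Then c·(α−1)·‖x₀‖_r^r / (C^{r/k} · r · m^{r/k−1}) ≤ sup{res_r(Δ) : AΔ = 0} ≤ ‖x₀‖_r^r. -/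
/-- The residual objective `res_p(Δ) = g^⊤Δ − 2∑_e w_e Δ_e² − ‖Δ‖_p^p`. -/
noncomputable def res {m : ℕ} (g w : Fin m → ℝ) (p : ℝ) (Δ : Fin m → ℝ) : ℝ :=
  (∑ e, g e * Δ e) - 2 * (∑ e, w e * Δ e ^ 2) - ∑ e, |Δ e| ^ p

open Real Finset

lemma absrpow_eq (x : ℝ) (p : ℝ) : |x| ^ p = (x^2) ^ (p/2) := by
  rw [← sq_abs, ← Real.rpow_natCast |x| 2, ← Real.rpow_mul (abs_nonneg _)]
  congr 1; ring

lemma bern {p : ℝ} (hp : 2 ≤ p) (x : ℝ) : 1 + p*x + p/2*x^2 ≤ |1+x| ^ p := by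
  rw [absrpow_eq]
  have h2 : (1+x)^2 = 1 + (2*x + x^2) := by ring
  rw [h2]
  have hb := one_add_mul_self_le_rpow_one_add (s := 2*x + x^2) (by nlinarith) (p := p/2) (by linarith)
  nlinarith [hb]

lemma rpow_two_eq (x : ℝ) : |x|^(2:ℝ) = x^2 := by
  rw [show (2:ℝ) = ((2:ℕ):ℝ) by norm_num, Real.rpow_natCast, sq_abs]

lemma half_pow_four (p : ℝ) : (1/2:ℝ)^(p+2) * (2:ℝ)^(p-2) = 1/16 := by
  rw [one_div, Real.inv_rpow (by norm_num : (0:ℝ) ≤ 2), inv_mul_eq_div,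
    ← Real.rpow_sub (by norm_num : (0:ℝ) < 2),
    show (p-2) - (p+2) = (-4:ℝ) by ring,
    show (-4:ℝ) = ((-4:ℤ):ℝ) by norm_num, Real.rpow_intCast]
  norm_num

lemma half_rpow_le (p : ℝ) (hp : 2 ≤ p) : (1/2:ℝ)^(p+2) ≤ 1/16 := by
  have h := Real.rpow_le_rpow_of_exponent_ge (x := (1/2:ℝ)) (by norm_num) (by norm_num)
    (show (4:ℝ) ≤ p + 2 by linarith)
  have h4 : (1/2:ℝ)^(4:ℝ) = 1/16 := by
    rw [show (4:ℝ) = ((4:ℕ):ℝ) by norm_num, Real.rpow_natCast]; norm_num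
  linarith [h4 ▸ h]

lemma keyB1 {p : ℝ} (hp : 2 ≤ p) (d : ℝ) :
    1 + p*d + p/4*d^2 + (1/2)^(p+2) * |d|^p ≤ |1+d|^p := by
  have hb := bern hp d
  rcases le_or_gt (|d|) 2 with hd2 | hd2
  · -- |d| ≤ 2
    have hE : (1/2:ℝ)^(p+2) * |d|^p ≤ (1/16) * d^2 := by
      rcases eq_or_ne d 0 with rfl | hd0
      · simp [Real.zero_rpow (by positivity : p ≠ (0:ℝ))]
      · have habs : (0:ℝ) < |d| := abs_pos.2 hd0
        have hsplit : |d|^p = |d|^(p-2) * |d|^(2:ℝ) := by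
          rw [← Real.rpow_add habs]; ring_nf
        have hle : |d|^(p-2) ≤ (2:ℝ)^(p-2) :=
          Real.rpow_le_rpow (abs_nonneg _) hd2 (by linarith)
        calc (1/2:ℝ)^(p+2) * |d|^p = (1/2:ℝ)^(p+2) * |d|^(p-2) * d^2 := by
              rw [hsplit, rpow_two_eq]; ring
          _ ≤ (1/2:ℝ)^(p+2) * (2:ℝ)^(p-2) * d^2 := by
              have h0 : (0:ℝ) ≤ (1/2:ℝ)^(p+2) := Real.rpow_nonneg (by norm_num) _
              nlinarith [sq_nonneg d, mul_le_mul_of_nonneg_left hle h0]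
          _ = (1/16) * d^2 := by rw [half_pow_four]
    nlinarith
  · rcases abs_cases d with ⟨hdd, hds⟩ | ⟨hdd, hds⟩
    · -- d > 2
      have hd2' : (2:ℝ) < d := by rwa [hdd] at hd2
      have hab : |1+d| = 1+d := abs_of_pos (by linarith)
      have hmono : d^p ≤ (1+d)^p := Real.rpow_le_rpow (by linarith) (by linarith) (by linarith)
      have hd4 : (4:ℝ) ≤ d^p := by
        have h1 : d^(2:ℝ) ≤ d^p := Real.rpow_le_rpow_of_exponent_le (by linarith) hp
        rw [show (2:ℝ) = ((2:ℕ):ℝ) by norm_num, Real.rpow_natCast] at h1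
        nlinarith [h1]
      have hE : (1/2:ℝ)^(p+2) * |d|^p ≤ (1/16) * d^p := by
        rw [hdd]
        exact mul_le_mul_of_nonneg_right (half_rpow_le p hp)
          (Real.rpow_nonneg (by linarith) p)
      rw [hab] at hb ⊢
      nlinarith [hb, hmono, hd4, hE,
        mul_nonneg (mul_nonneg (by linarith : (0:ℝ) ≤ p) (by linarith : (0:ℝ) ≤ d))
          (by linarith : (0:ℝ) ≤ d - 2)]
    · -- d < 0, |d| = -d > 2
      have hd2' : (2:ℝ) < -d := by rwa [hdd] at hd2
      have hab : |1+d| = -(1+d) := abs_of_neg (by linarith)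
      have hmono : ((-d)/2)^p ≤ (-(1+d))^p :=
        Real.rpow_le_rpow (by linarith) (by linarith) (by linarith)
      have hE : (1/2:ℝ)^(p+2) * (-d)^p = (1/4) * ((-d)/2)^p := by
        have e1 : ((-d)/2)^p = (-d)^p * (1/2:ℝ)^p := by
          rw [show (-d)/2 = (-d) * (1/2 : ℝ) by ring,
            Real.mul_rpow (by linarith) (by norm_num)]
        have e2 : (1/2:ℝ)^(p+2) = (1/2:ℝ)^p * (1/2:ℝ)^(2:ℝ) := by
          rw [← Real.rpow_add (by norm_num : (0:ℝ) < 1/2)]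
        have e3 : (1/2:ℝ)^(2:ℝ) = 1/4 := by
          rw [show (2:ℝ) = ((2:ℕ):ℝ) by norm_num, Real.rpow_natCast]; norm_num
        rw [e1, e2, e3]; ring
      rw [hab] at hb ⊢
      rw [hdd, hE]
      nlinarith [hb, hmono, mul_nonneg (by linarith : (0:ℝ) ≤ p) (by nlinarith : (0:ℝ) ≤ d^2 - 4),
        mul_nonneg (by linarith : (0:ℝ) ≤ p) (by linarith : (0:ℝ) ≤ -d - 2)]

lemma keyB {p : ℝ} (hp : 2 ≤ p) (a b : ℝ) :
    |a|^p + p*(|a|^(p-2)*a*(b-a)) + p/4*(|a|^(p-2)*(b-a)^2) + (1/2)^(p+2)*|b-a|^p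
      ≤ |b|^p := by
  have hp0 : (0:ℝ) < p := by linarith
  have main : ∀ a b : ℝ, 0 < a →
      |a|^p + p*(|a|^(p-2)*a*(b-a)) + p/4*(|a|^(p-2)*(b-a)^2) + (1/2)^(p+2)*|b-a|^p
        ≤ |b|^p := by
    intro a b ha
    have ha' : a ≠ 0 := ne_of_gt ha
    have key := keyB1 hp ((b-a)/a)
    have hA : (0:ℝ) < a^p := Real.rpow_pos_of_pos ha p
    have key' := mul_le_mul_of_nonneg_left key hA.le
    have hsplit : a ^ p = a ^ (p-2) * a * a := by
      have h1 : a ^ (p-2) * a ^ (1:ℝ) * a ^ (1:ℝ) = a ^ ((p-2)+1+1) := by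
        rw [Real.rpow_add ha, Real.rpow_add ha]
      rw [Real.rpow_one, show (p-2)+1+1 = p by ring] at h1
      exact h1.symm
    have expand : a^p * (1 + p*((b-a)/a) + p/4*((b-a)/a)^2 + (1/2)^(p+2)*|(b-a)/a|^p)
        = a^p + p*(a^p*((b-a)/a)) + p/4*(a^p*((b-a)/a)^2)
          + (1/2)^(p+2)*(a^p*|(b-a)/a|^p) := by ring
    have habs : a^p = |a|^p := by rw [abs_of_pos ha]
    have eqd : a^p * ((b-a)/a) = |a|^(p-2)*a*(b-a) := by
      rw [abs_of_pos ha, hsplit]; field_simp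
    have eqd2 : a^p * ((b-a)/a)^2 = |a|^(p-2)*(b-a)^2 := by
      rw [abs_of_pos ha, hsplit]; field_simp
    have eqdp : a^p * |(b-a)/a|^p = |b-a|^p := by
      rw [habs, ← Real.mul_rpow (abs_nonneg _) (abs_nonneg _), ← abs_mul,
        mul_comm a ((b-a)/a), div_mul_cancel₀ _ ha']
    have eq1 : a^p * |1+(b-a)/a|^p = |b|^p := by
      rw [show 1+(b-a)/a = b/a by field_simp; ring, habs,
        ← Real.mul_rpow (abs_nonneg _) (abs_nonneg _), ← abs_mul,
        mul_comm a (b/a), div_mul_cancel₀ _ ha']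
    rw [expand, eqd, eqd2, eqdp, eq1, habs] at key'
    exact key'
  rcases lt_trichotomy a 0 with ha | rfl | ha
  · have := main (-a) (-b) (by linarith)
    rw [show -b - -a = -(b-a) by ring, abs_neg, abs_neg, abs_neg, neg_sq] at this
    nlinarith [this]
  · have hb0 : |(0:ℝ)| ^ p = 0 := by
      rw [abs_zero, Real.zero_rpow (ne_of_gt hp0)]
    rcases eq_or_lt_of_le hp with rfl | hp2
    · have h0 : |(0:ℝ)|^((2:ℝ)-2) = 1 := by norm_num
      have hb2 : |b|^(2:ℝ) = b^2 := rpow_two_eq b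
      have hb2' : |b-0|^(2:ℝ) = b^2 := by rw [sub_zero, rpow_two_eq]
      have hc := half_rpow_le 2 le_rfl
      have hcpos : (0:ℝ) ≤ (1/2:ℝ)^((2:ℝ)+2) := Real.rpow_nonneg (by norm_num) _
      rw [hb0, h0, hb2, hb2']
      nlinarith [sq_nonneg b]
    · have h0 : |(0:ℝ)|^(p-2) = 0 := by
        rw [abs_zero, Real.zero_rpow (by linarith)]
      have hc := half_rpow_le p hp
      have hbp : (0:ℝ) ≤ |b-0|^p := Real.rpow_nonneg (abs_nonneg _) _
      rw [hb0, h0, sub_zero] at *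
      nlinarith [hbp, hc, Real.rpow_nonneg (abs_nonneg b) p]
  · exact main a b ha

lemma upperC {p : ℝ} (hp : 2 ≤ p) (a δ : ℝ) : |a|^(p-2)*a*δ ≤ |a|^p + |δ|^p := by
  rcases eq_or_ne a 0 with rfl | ha
  · simp only [mul_zero, zero_mul, abs_zero]
    positivity
  · have ha' : (0:ℝ) < |a| := abs_pos.2 ha
    have h1 : |a|^(p-2)*a*δ ≤ |a|^(p-1) * |δ| := by
      have : a*δ ≤ |a| * |δ| := by
        calc a*δ ≤ |a*δ| := le_abs_self _
          _ = |a| * |δ| := abs_mul a δ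
      have hnn : (0:ℝ) ≤ |a|^(p-2) := Real.rpow_nonneg (abs_nonneg a) _
      calc |a|^(p-2)*a*δ = |a|^(p-2)*(a*δ) := by ring
        _ ≤ |a|^(p-2)*(|a| * |δ|) := mul_le_mul_of_nonneg_left this hnn
        _ = (|a|^(p-2)*|a|^(1:ℝ))*|δ| := by rw [Real.rpow_one]; ring
        _ = |a|^(p-1) * |δ| := by rw [← Real.rpow_add ha']; ring_nf
    rcases le_total |δ| |a| with hle | hle
    · have h2 : |a|^(p-1)*|δ| ≤ |a|^(p-1)*|a| := mul_le_mul_of_nonneg_left hle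
        (Real.rpow_nonneg (abs_nonneg a) _)
      have h3 : |a|^(p-1)*|a| = |a|^p := by
        have h := Real.rpow_add ha' (p-1) 1
        rw [Real.rpow_one, show (p-1)+1 = p by ring] at h
        exact h.symm
      nlinarith [Real.rpow_nonneg (abs_nonneg δ) p]
    · rcases eq_or_ne δ 0 with rfl | hδ
      · have : |a| ≤ 0 := by simpa using hle
        exact absurd (lt_of_lt_of_le ha' this) (lt_irrefl _)
      · have hδ' : (0:ℝ) < |δ| := abs_pos.2 hδ
        have h2 : |a|^(p-1) ≤ |δ|^(p-1) := Real.rpow_le_rpow (abs_nonneg a) hle (by linarith)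
        have h3 : |a|^(p-1)*|δ| ≤ |δ|^(p-1)*|δ| := mul_le_mul_of_nonneg_right h2 (abs_nonneg δ)
        have h4 : |δ|^(p-1)*|δ| = |δ|^p := by
          have h := Real.rpow_add hδ' (p-1) 1
          rw [Real.rpow_one, show (p-1)+1 = p by ring] at h
          exact h.symm
        nlinarith [Real.rpow_nonneg (abs_nonneg a) p]

lemma normN1 {m : ℕ} (x : Fin m → ℝ) {k r : ℝ} (hk : 0 < k) (hkr : k ≤ r) :
    ∑ e, |x e| ^ r ≤ (∑ e, |x e| ^ k) ^ (r/k) := by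
  set S := ∑ e, |x e| ^ k with hS
  have hS0 : (0:ℝ) ≤ S := Finset.sum_nonneg fun e _ => Real.rpow_nonneg (abs_nonneg _) _
  rcases eq_or_lt_of_le hS0 with hS0' | hSpos
  · have hz : ∀ e ∈ Finset.univ, |x e| ^ k = 0 := by
      intro e _
      have := (Finset.sum_eq_zero_iff_of_nonneg
        (fun e _ => Real.rpow_nonneg (abs_nonneg (x e)) k)).1 hS0'.symm
      exact this e (Finset.mem_univ e)
    have hx : ∀ e, x e = 0 := by
      intro e
      have h := hz e (Finset.mem_univ e)
      have := (Real.rpow_eq_zero (abs_nonneg (x e)) (ne_of_gt hk)).1 h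
      simpa using this
    have h1 : ∑ e, |x e| ^ r = 0 := by
      apply Finset.sum_eq_zero; intro e _
      rw [hx e, abs_zero, Real.zero_rpow (ne_of_gt (lt_of_lt_of_le hk hkr))]
    rw [h1, ← hS0', Real.zero_rpow (ne_of_gt (div_pos (lt_of_lt_of_le hk hkr) hk))]
  · have hstep : ∀ e, |x e| ^ r ≤ |x e| ^ k * S ^ ((r-k)/k) := by
      intro e
      rcases eq_or_ne (x e) 0 with hxe | hxe
      · rw [hxe, abs_zero, Real.zero_rpow (ne_of_gt (lt_of_lt_of_le hk hkr)),
          Real.zero_rpow (ne_of_gt hk)]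
        simp
      · have hxa : (0:ℝ) < |x e| := abs_pos.2 hxe
        have hsplit : |x e| ^ r = |x e| ^ k * |x e| ^ (r-k) := by
          rw [← Real.rpow_add hxa]; ring_nf
        have hle : |x e| ^ k ≤ S :=
          Finset.single_le_sum (fun e _ => Real.rpow_nonneg (abs_nonneg (x e)) k)
            (Finset.mem_univ e)
        have hbase : |x e| ≤ S ^ (1/k) := by
          have h1 : (|x e| ^ k) ^ (1/k) ≤ S ^ (1/k) :=
            Real.rpow_le_rpow (Real.rpow_nonneg (abs_nonneg _) _) hle (by positivity)
          rwa [← Real.rpow_mul (abs_nonneg _), mul_one_div, div_self (ne_of_gt hk),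
            Real.rpow_one] at h1
        have h2 : |x e| ^ (r-k) ≤ (S ^ (1/k)) ^ (r-k) :=
          Real.rpow_le_rpow (abs_nonneg _) hbase (by linarith)
        rw [← Real.rpow_mul hS0, one_div, inv_mul_eq_div] at h2
        rw [hsplit, show (r-k)/k = k⁻¹ * (r-k) by ring] at *
        exact mul_le_mul_of_nonneg_left (by rw [show k⁻¹*(r-k) = (r-k)/k by ring] at h2 ⊢; exact h2)
          (Real.rpow_nonneg (abs_nonneg _) _)
    calc ∑ e, |x e| ^ r ≤ ∑ e, |x e| ^ k * S ^ ((r-k)/k) :=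
          Finset.sum_le_sum fun e _ => hstep e
      _ = S * S ^ ((r-k)/k) := by rw [← Finset.sum_mul]
      _ = S ^ (1 + (r-k)/k) := by rw [Real.rpow_add hSpos, Real.rpow_one]
      _ = S ^ (r/k) := by rw [show 1 + (r-k)/k = r/k by field_simp; ring]

lemma normN2 {m : ℕ} (hm : 0 < m) (x : Fin m → ℝ) {k r : ℝ} (hk : 0 < k) (hkr : k ≤ r) :
    (∑ e, |x e| ^ k) ^ (r/k) ≤ (m:ℝ) ^ (r/k - 1) * ∑ e, |x e| ^ r := by
  have hmR : (0:ℝ) < (m:ℝ) := by exact_mod_cast hm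
  have hq : (1:ℝ) ≤ r/k := by
    rw [le_div_iff₀ hk]; linarith
  have jensen := Real.rpow_arith_mean_le_arith_mean_rpow Finset.univ
    (fun _ : Fin m => (m:ℝ)⁻¹) (fun e => |x e| ^ k)
    (fun i _ => by positivity)
    (by simp [Finset.card_univ]; field_simp)
    (fun i _ => Real.rpow_nonneg (abs_nonneg _) _) hq
  have hL : ∑ i : Fin m, (m:ℝ)⁻¹ * |x i| ^ k = (m:ℝ)⁻¹ * ∑ e, |x e| ^ k := by
    rw [Finset.mul_sum]
  have hR : ∀ i : Fin m, (|x i| ^ k) ^ (r/k) = |x i| ^ r := by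
    intro i
    rw [← Real.rpow_mul (abs_nonneg _), mul_div_assoc']
    congr 1
    field_simp
  rw [hL] at jensen
  have jensen2 : ((m:ℝ)⁻¹ * ∑ e, |x e| ^ k) ^ (r/k)
      ≤ (m:ℝ)⁻¹ * ∑ e, |x e| ^ r := by
    refine jensen.trans_eq ?_
    rw [← Finset.mul_sum]
    congr 1
    exact Finset.sum_congr rfl fun i _ => hR i
  have hmul : ((m:ℝ)⁻¹ * ∑ e, |x e| ^ k) ^ (r/k)
      = ((m:ℝ)⁻¹) ^ (r/k) * (∑ e, |x e| ^ k) ^ (r/k) :=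
    Real.mul_rpow (by positivity) (Finset.sum_nonneg fun e _ =>
      Real.rpow_nonneg (abs_nonneg _) _)
  rw [hmul] at jensen2
  have key := mul_le_mul_of_nonneg_left jensen2 (le_of_lt (Real.rpow_pos_of_pos hmR (r/k)))
  have e1 : (m:ℝ) ^ (r/k) * (((m:ℝ)⁻¹) ^ (r/k) * (∑ e, |x e| ^ k) ^ (r/k))
      = (∑ e, |x e| ^ k) ^ (r/k) := by
    rw [Real.inv_rpow hmR.le, ← mul_assoc, mul_inv_cancel₀ (ne_of_gt (Real.rpow_pos_of_pos hmR _))]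
    ring
  have e2 : (m:ℝ) ^ (r/k) * ((m:ℝ)⁻¹ * ∑ e, |x e| ^ r)
      = (m:ℝ) ^ (r/k - 1) * ∑ e, |x e| ^ r := by
    rw [show r/k - 1 = r/k + (-1) by ring, Real.rpow_add hmR, Real.rpow_neg_one]
    ring
  rw [e1, e2] at key
  exact key

lemma theta_cond {p : ℝ} (hp : 2 ≤ p) : ((1:ℝ)/64)^p ≤ (1/64) * ((1/2)^(p+2) / p) := by
  have hppos : (0:ℝ) < p := by linarith
  -- core : p ≤ 2^(5p-8)
  have hcore : p ≤ (2:ℝ)^(5*p-8) := by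
    have hsplit : (2:ℝ)^(5*p-8) = 4 * (2:ℝ)^(5*(p-2)) := by
      rw [show 5*p-8 = 2 + 5*(p-2) by ring, Real.rpow_add (by norm_num : (0:ℝ) < 2),
        show (2:ℝ)^(2:ℝ) = 4 by rw [show (2:ℝ) = ((2:ℕ):ℝ) by norm_num, Real.rpow_natCast]; norm_num]
    rcases le_total p 4 with h4 | h4
    · have h1 : (1:ℝ) ≤ (2:ℝ)^(5*(p-2)) := by
        have := Real.rpow_le_rpow_of_exponent_le (by norm_num : (1:ℝ) ≤ 2)
          (show (0:ℝ) ≤ 5*(p-2) by linarith)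
        rwa [Real.rpow_zero] at this
      rw [hsplit]; nlinarith
    · have hb := one_add_mul_self_le_rpow_one_add (s := (1:ℝ)) (by norm_num)
        (p := 5*(p-2)) (by linarith)
      norm_num at hb
      rw [hsplit]; nlinarith
  -- assemble
  have e64 : ((1:ℝ)/64)^p = (1/64) * ((1:ℝ)/64)^(p-1) := by
    have h := Real.rpow_add (by norm_num : (0:ℝ) < 1/64) 1 (p-1)
    rw [Real.rpow_one, show (1:ℝ)+(p-1) = p by ring] at h
    exact h
  have esplit : ((1:ℝ)/64)^(p-1) = (1/2:ℝ)^(p+2) * (1/2:ℝ)^(5*p-8) := by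
    have h0 : ((1:ℝ)/64) = (1/2:ℝ)^((6:ℕ):ℝ) := by
      rw [Real.rpow_natCast]; norm_num
    rw [h0, ← Real.rpow_mul (by norm_num : (0:ℝ) ≤ 1/2),
      show ((6:ℕ):ℝ)*(p-1) = (p+2) + (5*p-8) by push_cast; ring,
      Real.rpow_add (by norm_num : (0:ℝ) < 1/2)]
  have hinv : (1/2:ℝ)^(5*p-8) ≤ 1/p := by
    have h2 : (1/2:ℝ)^(5*p-8) = ((2:ℝ)^(5*p-8))⁻¹ := by
      rw [one_div, Real.inv_rpow (by norm_num : (0:ℝ) ≤ 2)]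
    rw [h2, one_div]
    exact inv_anti₀ hppos hcore
  calc ((1:ℝ)/64)^p = (1/64) * ((1/2:ℝ)^(p+2) * (1/2:ℝ)^(5*p-8)) := by rw [e64, esplit]
    _ ≤ (1/64) * ((1/2:ℝ)^(p+2) * (1/p)) := by
        have hnn : (0:ℝ) ≤ (1/2:ℝ)^(p+2) := Real.rpow_nonneg (by norm_num) _
        have := mul_le_mul_of_nonneg_left hinv hnn
        nlinarith
    _ = (1/64) * ((1/2)^(p+2) / p) := by ring


set_option maxHeartbeats 1000000 in
/-- Lemma B.3, BinarySearch: the value of the `r`-norm residual problem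
at a `C`-approximate `k`-norm minimizer `x₀` lies in the stated range.  Here the residual
at `x₀` has gradient `g_e = |x₀ₑ|^{r−2}x₀ₑ` and weights `|x₀ₑ|^{r−2}`. -/
theorem stmt_8 :
    ∃ c : ℝ, 0 < c ∧
      ∀ (n m : ℕ) (k r : ℝ), 2 ≤ k → k ≤ r →
        ∀ (C α : ℝ), 1 ≤ C → 1 < α →
          ∀ (A : Matrix (Fin n) (Fin m) ℝ) (b : Fin n → ℝ) (x₀ xs : Fin m → ℝ),
            A.mulVec x₀ = b →
            (∀ x, A.mulVec x = b → (∑ e, |x₀ e| ^ k) ≤ C * ∑ e, |x e| ^ k) →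
            A.mulVec xs = b →
            (∀ x, A.mulVec x = b → (∑ e, |xs e| ^ r) ≤ ∑ e, |x e| ^ r) →
            α * (∑ e, |xs e| ^ r) < (∑ e, |x₀ e| ^ r) →
            c * (α - 1) * (∑ e, |x₀ e| ^ r)
                / (C ^ (r / k) * r * (m : ℝ) ^ (r / k - 1))
              ≤ sSup {y | ∃ Δ : Fin m → ℝ, A.mulVec Δ = 0 ∧
                  y = res (fun e => |x₀ e| ^ (r - 2) * x₀ e) (fun e => |x₀ e| ^ (r - 2)) r Δ} ∧
            sSup {y | ∃ Δ : Fin m → ℝ, A.mulVec Δ = 0 ∧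
                  y = res (fun e => |x₀ e| ^ (r - 2) * x₀ e) (fun e => |x₀ e| ^ (r - 2)) r Δ}
              ≤ ∑ e, |x₀ e| ^ r := by
  refine ⟨1/64, by norm_num, ?_⟩
  intro n m k r hk hkr C α hC hα A b x₀ xs hx₀ hx₀min hxs _hxsmin hgap
  have hr2 : (2:ℝ) ≤ r := le_trans hk hkr
  have hrpos : (0:ℝ) < r := by linarith
  have hkpos : (0:ℝ) < k := by linarith
  set F := ∑ e, |x₀ e| ^ r with hF
  set Fs := ∑ e, |xs e| ^ r with hFs
  have hF0 : (0:ℝ) ≤ F := Finset.sum_nonneg fun e _ => Real.rpow_nonneg (abs_nonneg _) _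
  have hFs0 : (0:ℝ) ≤ Fs := Finset.sum_nonneg fun e _ => Real.rpow_nonneg (abs_nonneg _) _
  have hFpos : (0:ℝ) < F := by nlinarith
  set SS := {y | ∃ Δ : Fin m → ℝ, A.mulVec Δ = 0 ∧
      y = res (fun e => |x₀ e| ^ (r - 2) * x₀ e) (fun e => |x₀ e| ^ (r - 2)) r Δ} with hSS
  -- every element of SS is at most F
  have hub : ∀ y ∈ SS, y ≤ F := by
    rintro y ⟨Δ, _hΔ, rfl⟩
    simp only [res]
    have h1 : ∑ e, (|x₀ e| ^ (r-2) * x₀ e) * Δ e ≤ ∑ e, (|x₀ e| ^ r + |Δ e| ^ r) := by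
      refine Finset.sum_le_sum fun e _ => ?_
      have := upperC hr2 (x₀ e) (Δ e)
      linarith
    have h2 : ∑ e, (|x₀ e| ^ r + |Δ e| ^ r) = F + ∑ e, |Δ e| ^ r :=
      Finset.sum_add_distrib
    have h3 : (0:ℝ) ≤ ∑ e, |x₀ e| ^ (r-2) * Δ e ^ 2 :=
      Finset.sum_nonneg fun e _ => mul_nonneg (Real.rpow_nonneg (abs_nonneg _) _) (sq_nonneg _)
    linarith
  have hbdd : BddAbove SS := ⟨F, fun y hy => hub y hy⟩
  constructor
  · -- lower bound
    rcases Nat.eq_zero_or_pos m with rfl | hm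
    · exfalso
      have : F = 0 := by simp [hF]
      linarith
    -- key quantities
    set G₁ := ∑ e, (|x₀ e| ^ (r-2) * x₀ e) * (x₀ e - xs e) with hG₁
    set S₂ := ∑ e, |x₀ e| ^ (r-2) * (x₀ e - xs e)^2 with hS₂
    set Sr := ∑ e, |x₀ e - xs e| ^ r with hSr
    have hS₂0 : (0:ℝ) ≤ S₂ :=
      Finset.sum_nonneg fun e _ => mul_nonneg (Real.rpow_nonneg (abs_nonneg _) _) (sq_nonneg _)
    have hSr0 : (0:ℝ) ≤ Sr :=
      Finset.sum_nonneg fun e _ => Real.rpow_nonneg (abs_nonneg _) _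
    -- strong convexity
    have hexp : F - r*G₁ + r/4*S₂ + (1/2:ℝ)^(r+2)*Sr
        = ∑ e, (|x₀ e| ^ r - r*((|x₀ e| ^ (r-2) * x₀ e) * (x₀ e - xs e))
            + r/4*(|x₀ e| ^ (r-2) * (x₀ e - xs e)^2) + (1/2:ℝ)^(r+2)*|x₀ e - xs e| ^ r) := by
      simp only [Finset.sum_add_distrib, Finset.sum_sub_distrib, ← Finset.mul_sum]
      rfl
    have hpt : ∀ e : Fin m, |x₀ e| ^ r - r*((|x₀ e| ^ (r-2) * x₀ e) * (x₀ e - xs e))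
        + r/4*(|x₀ e| ^ (r-2) * (x₀ e - xs e)^2) + (1/2:ℝ)^(r+2)*|x₀ e - xs e| ^ r
        ≤ |xs e| ^ r := by
      intro e
      have h := keyB hr2 (x₀ e) (xs e)
      rw [abs_sub_comm (xs e) (x₀ e)] at h
      nlinarith [h]
    have hsc : F - r*G₁ + r/4*S₂ + (1/2:ℝ)^(r+2)*Sr ≤ Fs := by
      rw [hexp]
      exact Finset.sum_le_sum fun e _ => hpt e
    have hG₁ineq : (F - Fs) + r/4*S₂ + (1/2:ℝ)^(r+2)*Sr ≤ r*G₁ := by linarith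
    -- the test point
    set Δθ : Fin m → ℝ := fun e => (1/64) * (x₀ e - xs e) with hΔθ
    have hmemv : A.mulVec Δθ = 0 := by
      have hΔeq : Δθ = (1/64:ℝ) • (x₀ - xs) := by
        funext e; simp [hΔθ]
      rw [hΔeq, Matrix.mulVec_smul, Matrix.mulVec_sub, hx₀, hxs, sub_self, smul_zero]
    have hresval : res (fun e => |x₀ e| ^ (r - 2) * x₀ e) (fun e => |x₀ e| ^ (r - 2)) r Δθ
        = (1/64)*G₁ - 2*((1/64:ℝ)^2 * S₂) - (1/64:ℝ)^(r:ℝ) * Sr := by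
      simp only [res]
      have e1 : ∑ e, (|x₀ e| ^ (r-2) * x₀ e) * Δθ e = (1/64)*G₁ := by
        rw [hG₁, Finset.mul_sum]
        exact Finset.sum_congr rfl fun e _ => by simp [hΔθ]; ring
      have e2 : ∑ e, |x₀ e| ^ (r-2) * Δθ e ^ 2 = (1/64:ℝ)^2 * S₂ := by
        rw [hS₂, Finset.mul_sum]
        exact Finset.sum_congr rfl fun e _ => by simp [hΔθ]; ring
      have e3 : ∑ e, |Δθ e| ^ r = (1/64:ℝ)^(r:ℝ) * Sr := by
        rw [hSr, Finset.mul_sum]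
        refine Finset.sum_congr rfl fun e _ => ?_
        rw [hΔθ]
        simp only
        rw [abs_mul, Real.mul_rpow (abs_nonneg _) (abs_nonneg _),
          show |(1/64:ℝ)| = (1/64:ℝ) by norm_num]
      rw [e1, e2, e3]
    -- lower bound on the residual value
    have ht := theta_cond hr2
    have h5 : (1/64:ℝ)^(r:ℝ) * Sr ≤ (1/64)*((1/2:ℝ)^(r+2)/r) * Sr :=
      mul_le_mul_of_nonneg_right ht hSr0
    have h7 : ((1/64:ℝ)/r)*((F - Fs) + r/4*S₂ + (1/2:ℝ)^(r+2)*Sr) ≤ ((1/64:ℝ)/r)*(r*G₁) :=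
      mul_le_mul_of_nonneg_left hG₁ineq (by positivity)
    have h8 : ((1/64:ℝ)/r)*((F - Fs) + r/4*S₂ + (1/2:ℝ)^(r+2)*Sr)
        = (1/64)*((F-Fs)/r) + (1/256)*S₂ + (1/64)*((1/2:ℝ)^(r+2)/r)*Sr := by
      field_simp
      ring
    have h6 : ((1/64:ℝ)/r)*(r*G₁) = (1/64)*G₁ := by
      field_simp
    have hreslow : (1/64)*((F-Fs)/r)
        ≤ res (fun e => |x₀ e| ^ (r - 2) * x₀ e) (fun e => |x₀ e| ^ (r - 2)) r Δθ := by
      rw [hresval]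
      linarith [h5, h7, h8, h6, hS₂0]
    have hmem : res (fun e => |x₀ e| ^ (r - 2) * x₀ e) (fun e => |x₀ e| ^ (r - 2)) r Δθ ∈ SS :=
      ⟨Δθ, hmemv, rfl⟩
    have hsup : (1/64)*((F-Fs)/r) ≤ sSup SS :=
      le_trans hreslow (le_csSup hbdd hmem)
    -- norm comparison : α < M
    set M := C ^ (r/k) * (m:ℝ) ^ (r/k - 1) with hM
    have hMpos : (0:ℝ) < M := by
      have h1 : (0:ℝ) < C ^ (r/k) := Real.rpow_pos_of_pos (by linarith) _
      have h2 : (0:ℝ) < (m:ℝ) ^ (r/k - 1) :=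
        Real.rpow_pos_of_pos (by exact_mod_cast hm) _
      positivity
    have hFM : F ≤ M * Fs := by
      have n1 : F ≤ (∑ e, |x₀ e| ^ k) ^ (r/k) := normN1 x₀ hkpos hkr
      have n2 : (∑ e, |x₀ e| ^ k) ^ (r/k) ≤ (C * ∑ e, |xs e| ^ k) ^ (r/k) :=
        Real.rpow_le_rpow (Finset.sum_nonneg fun e _ => Real.rpow_nonneg (abs_nonneg _) _)
          (hx₀min xs hxs) (by positivity)
      have n3 : (C * ∑ e, |xs e| ^ k) ^ (r/k)
          = C ^ (r/k) * (∑ e, |xs e| ^ k) ^ (r/k) :=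
        Real.mul_rpow (by linarith)
          (Finset.sum_nonneg fun e _ => Real.rpow_nonneg (abs_nonneg _) _)
      have n4 : (∑ e, |xs e| ^ k) ^ (r/k) ≤ (m:ℝ) ^ (r/k - 1) * Fs := normN2 hm xs hkpos hkr
      calc F ≤ (C * ∑ e, |xs e| ^ k) ^ (r/k) := le_trans n1 n2
        _ = C ^ (r/k) * (∑ e, |xs e| ^ k) ^ (r/k) := n3
        _ ≤ C ^ (r/k) * ((m:ℝ) ^ (r/k - 1) * Fs) := by
            refine mul_le_mul_of_nonneg_left n4 ?_
            positivity
        _ = M * Fs := by rw [hM]; ring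
    have hFspos : (0:ℝ) < Fs := by
      rcases eq_or_lt_of_le hFs0 with h | h
      · exfalso; rw [← h, mul_zero] at hFM; linarith
      · exact h
    have hαM : α ≤ M := by
      have : α * Fs < M * Fs := lt_of_lt_of_le hgap hFM
      have := lt_of_mul_lt_mul_right this hFs0
      linarith
    -- final chain
    have hden : C ^ (r/k) * r * (m:ℝ) ^ (r/k - 1) = r * M := by rw [hM]; ring
    rw [hden]
    have hgap2 : (α - 1)/α * F ≤ F - Fs := by
      have hFsle : Fs < F/α := by
        rw [lt_div_iff₀ (by linarith : (0:ℝ) < α)]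
        linarith [hgap]
      have : (α-1)/α * F = F - F/α := by field_simp
      rw [this]
      linarith
    have hstep1 : (1/64) * (α - 1) * F / (r * M) ≤ (1/64) * (α - 1) * F / (r * α) := by
      apply div_le_div_of_nonneg_left
      · nlinarith
      · nlinarith
      · nlinarith
    have hstep2 : (1/64) * (α - 1) * F / (r * α) ≤ (1/64)*((F-Fs)/r) := by
      rw [div_le_iff₀ (by positivity : (0:ℝ) < r * α)]
      have h9 : (1/64)*((F-Fs)/r) * (r*α) = (1/64)*(F-Fs)*α := by field_simp
      rw [h9]
      have h10 : (α-1)*F ≤ (F - Fs)*α := by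
        have := mul_le_mul_of_nonneg_right hgap2 (by linarith : (0:ℝ) ≤ α)
        have hα0 : α ≠ 0 := by linarith
        calc (α-1)*F = (α-1)/α*F*α := by field_simp
          _ ≤ (F-Fs)*α := by
              exact mul_le_mul_of_nonneg_right hgap2 (by linarith)
      linarith [h10]
    exact le_trans (le_trans hstep1 hstep2) hsup
  · exact Real.sSup_le (fun y hy => hub y hy) hF0
end

section
/- There exists a universal constant c > 0 such that the following holds. Let p and q be reals with 2 ≤ p < q, let C ≥ 1 and α > 1, let A ∈ ℝ^{n×m} and b ∈ ℝ^n. Suppose x₀ satisfies Ax₀ = b and ‖x₀‖_q^q ≤ C·‖x‖_q^q for every x with Ax = b; suppose the minimum of ‖x‖_p^p over {x : Ax = b} is attained at x*, and ‖x₀‖_p^p > α‖x*‖_p^p. Define the residual at x₀ by g_e = |x₀ₑ|^{p−2}x₀ₑ and r_e = |x₀ₑ|^{p−2}. Then c·(α−1)·‖x₀‖_p^p / (C^{p/q} · p · m) ≤ sup{res_p(Δ) : AΔ = 0} ≤ ‖x₀‖_p^p. -/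
open Real Finset



lemma rpow_two' (x : ℝ) : x^(2:ℝ) = x^2 := by
  rw [show (2:ℝ) = ((2:ℕ):ℝ) by norm_num, Real.rpow_natCast]

lemma b_le (p : ℝ) (hp : 2 ≤ p) : ((2:ℝ)^(p+1))⁻¹ ≤ 1/8 := by
  rw [inv_le_comm₀ (by positivity) (by norm_num)]
  have h : (2:ℝ)^(3:ℝ) ≤ (2:ℝ)^(p+1) :=
    Real.rpow_le_rpow_of_exponent_le (by norm_num) (by linarith)
  have h3 : (2:ℝ)^(3:ℝ) = 8 := by
    rw [show (3:ℝ) = ((3:ℕ):ℝ) by norm_num, Real.rpow_natCast]; norm_num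
  linarith

lemma bern_sq {s p : ℝ} (hs : -1 ≤ s) (hp : 2 ≤ p) (hpos : 0 ≤ 1 + p/2 * s) :
    (1 + p/2 * s)^2 ≤ (1+s)^p := by
  have h1 : 1 + p/2 * s ≤ (1+s)^(p/2) :=
    one_add_mul_self_le_rpow_one_add hs (by linarith)
  have h2 : ((1+s)^(p/2))^2 = (1+s)^p := by
    rw [← rpow_two' ((1+s)^(p/2)), ← Real.rpow_mul (by linarith)]
    norm_num
  calc (1 + p/2 * s)^2 ≤ ((1+s)^(p/2))^2 := by
        apply sq_le_sq' (by nlinarith [Real.rpow_nonneg (show (0:ℝ) ≤ 1+s by linarith) (p/2)]) h1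
    _ = (1+s)^p := h2

set_option maxHeartbeats 1000000 in
lemma core_pos {p : ℝ} (hp : 2 ≤ p) {t : ℝ} (ht : 0 ≤ t) :
    1 + p*t + p/8*t^2 + ((2:ℝ)^(p+1))⁻¹ * t^p ≤ (1+t)^p := by
  have hb := b_le p hp
  have hb0 : 0 < ((2:ℝ)^(p+1))⁻¹ := by positivity
  have htp0 : 0 ≤ t^p := Real.rpow_nonneg ht p
  have hB : (1 + p/2 * t)^2 ≤ (1+t)^p := bern_sq (by linarith) hp (by nlinarith)
  have hfac : (0:ℝ) ≤ (2*p+1)*(p-1) := by nlinarith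
  rcases le_or_gt t 1 with ht1 | ht1
  · have htp : t^p ≤ t^2 := by
      rcases eq_or_lt_of_le ht with h0 | h0
      · rw [← h0, Real.zero_rpow (by linarith)]; positivity
      · calc t^p ≤ t^(2:ℝ) := Real.rpow_le_rpow_of_exponent_ge h0 ht1 hp
          _ = t^2 := rpow_two' t
    have e1 : ((2:ℝ)^(p+1))⁻¹ * t^p ≤ 1/8 * t^2 := by nlinarith
    nlinarith [mul_nonneg hfac (sq_nonneg t)]
  · have ht0 : 0 < t := by linarith
    have hs : (1:ℝ)/t ≤ 1 := by rw [div_le_one ht0]; linarith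
    have hs0 : 0 < 1/t := by positivity
    have hB2 : (1 + p/2 * (1/t))^2 ≤ (1+1/t)^p := bern_sq (by linarith) hp (by positivity)
    have hsplit : (1+t)^p = t^p * (1+1/t)^p := by
      rw [← Real.mul_rpow (le_of_lt ht0) (by positivity)]
      congr 1
      field_simp
      ring
    have htpos : 0 < t^p := Real.rpow_pos_of_pos ht0 p
    have hexp : t^p * (1 + p/2*(1/t))^2 = t^p + p * (t^p/t) + p^2/4 * (t^p/t^2) := by
      field_simp; ring
    have hmain : t^p + p * (t^p/t) + p^2/4 * (t^p/t^2) ≤ (1+t)^p := by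
      rw [hsplit, ← hexp]
      exact mul_le_mul_of_nonneg_left hB2 (le_of_lt htpos)
    have ht2p : t^2 ≤ t^p := by
      calc t^2 = t^(2:ℝ) := (rpow_two' t).symm
        _ ≤ t^p := Real.rpow_le_rpow_of_exponent_le (by linarith) hp
    have ht1p : t ≤ t^p/t := by
      rw [le_div_iff₀ ht0]; nlinarith
    have hq1 : 1 ≤ t^p/t^2 := by
      rw [le_div_iff₀ (by positivity)]; nlinarith
    have e1 : p * t ≤ p * (t^p/t) := by
      apply mul_le_mul_of_nonneg_left ht1p (by linarith)
    have e2 : ((2:ℝ)^(p+1))⁻¹ * t^p ≤ 1/8 * t^p := by nlinarith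
    rcases le_or_gt p 7 with hp7 | hp7
    · have e3 : p/8 * t^2 ≤ 7/8 * t^p := by
        have h1 : p/8 * t^2 ≤ 7/8 * t^2 := by nlinarith [sq_nonneg t]
        have h2 : (7:ℝ)/8 * t^2 ≤ 7/8 * t^p :=
          mul_le_mul_of_nonneg_left ht2p (by norm_num)
        linarith
      have e4 : (1:ℝ) ≤ p^2/4 * (t^p/t^2) := by
        have h1 : (1:ℝ) ≤ p^2/4 := by nlinarith
        calc (1:ℝ) = 1*1 := by norm_num
          _ ≤ p^2/4 * (t^p/t^2) := mul_le_mul h1 hq1 (by norm_num) (by positivity)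
      linarith
    · have h22 : (1:ℝ) ≤ t^2 := by nlinarith
      have ht2q : t^2 ≤ t^p/t^2 := by
        rw [le_div_iff₀ (by positivity)]
        have : t^2*t^2 = t^(4:ℝ) := by
          rw [show (4:ℝ) = ((4:ℕ):ℝ) by norm_num, Real.rpow_natCast]; ring
        rw [this]
        exact Real.rpow_le_rpow_of_exponent_le (by linarith) (by linarith)
      have e5 : p/8 * t^2 + 1 ≤ p^2/4 * t^2 := by nlinarith
      have e6 : p^2/4 * t^2 ≤ p^2/4 * (t^p/t^2) := by
        apply mul_le_mul_of_nonneg_left ht2q (by positivity)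
      linarith



set_option maxHeartbeats 1000000 in
lemma core_neg {p : ℝ} (hp : 2 ≤ p) {u : ℝ} (hu : 0 < u) :
    1 - p*u + p/8*u^2 + ((2:ℝ)^(p+1))⁻¹ * u^p ≤ |1-u|^p := by
  have hb := b_le p hp
  have hb0 : 0 < ((2:ℝ)^(p+1))⁻¹ := by positivity
  have hup0 : 0 < u^p := Real.rpow_pos_of_pos hu p
  have habsp : 0 ≤ |1-u|^p := Real.rpow_nonneg (abs_nonneg _) p
  rcases le_or_gt u (2/p) with hsml | hsml
  · -- p*u ≤ 2, u ≤ 1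
    have hpu : u * p ≤ 2 := by rwa [le_div_iff₀ (by linarith : (0:ℝ) < p)] at hsml
    have hu1 : u ≤ 1 := by nlinarith
    have habs : |1-u| = 1-u := abs_of_nonneg (by linarith)
    rw [habs]
    have hB : (1 - p/2*u)^2 ≤ (1-u)^p := by
      have := bern_sq (s := -u) (by linarith) hp (by nlinarith)
      calc (1 - p/2*u)^2 = (1 + p/2 * (-u))^2 := by ring
        _ ≤ (1 + -u)^p := this
        _ = (1-u)^p := by ring_nf
    have hup2 : u^p ≤ u^2 := by
      calc u^p ≤ u^(2:ℝ) := Real.rpow_le_rpow_of_exponent_ge hu hu1 hp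
        _ = u^2 := rpow_two' u
    have hfac : (0:ℝ) ≤ (2*p+1)*(p-1) := by nlinarith
    nlinarith [mul_nonneg hfac (sq_nonneg u)]
  · have hpu : 2 < p * u := by
      rw [div_lt_iff₀ (show (0:ℝ) < p by linarith)] at hsml; nlinarith
    rcases le_or_gt u 1 with hu1 | hu1
    · -- 2/p < u ≤ 1
      have hup1 : u^p ≤ u := by
        calc u^p ≤ u^(1:ℝ) := Real.rpow_le_rpow_of_exponent_ge hu hu1 (by linarith)
          _ = u := Real.rpow_one u
      have a1 : p/8*u^2 ≤ p/8*u := by nlinarith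
      have a2 : ((2:ℝ)^(p+1))⁻¹ * u^p ≤ 1/8*u := by nlinarith
      have a3 : 1/8*u ≤ p/16*u := by nlinarith
      nlinarith
    · rcases le_or_gt u 2 with hu2 | hu2
      · -- 1 < u ≤ 2
        have hsplit : u^p = u^2 * u^(p-2) := by
          rw [← rpow_two' u, ← Real.rpow_add hu]; norm_num
        have hmono : u^(p-2) ≤ (2:ℝ)^(p-2) := Real.rpow_le_rpow (le_of_lt hu) hu2 (by linarith)
        have h28 : (2:ℝ)^(p-2) * ((2:ℝ)^(p+1))⁻¹ = 1/8 := by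
          rw [← Real.rpow_neg (by norm_num : (0:ℝ) ≤ 2), ← Real.rpow_add (by norm_num : (0:ℝ) < 2)]
          rw [show p - 2 + -(p+1) = -((3:ℕ):ℝ) by push_cast; ring]
          rw [Real.rpow_neg (by norm_num), Real.rpow_natCast]
          norm_num
        have a2 : ((2:ℝ)^(p+1))⁻¹ * u^p ≤ 1/8 * u^2 := by
          calc ((2:ℝ)^(p+1))⁻¹ * u^p = u^2 * (u^(p-2) * ((2:ℝ)^(p+1))⁻¹) := by rw [hsplit]; ring
            _ ≤ u^2 * ((2:ℝ)^(p-2) * ((2:ℝ)^(p+1))⁻¹) := by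
                apply mul_le_mul_of_nonneg_left _ (sq_nonneg u)
                exact mul_le_mul_of_nonneg_right hmono (le_of_lt hb0)
            _ = 1/8 * u^2 := by rw [h28]; ring
        have huu : u^2 ≤ 2*u := by nlinarith
        nlinarith [mul_le_mul_of_nonneg_left huu (show (0:ℝ) ≤ p/8 by linarith)]
      · -- u > 2
        have habs : |1-u| = u-1 := by rw [abs_of_nonpos (by linarith)]; ring
        rw [habs]
        have hA : u^p * (2 * ((2:ℝ)^(p+1))⁻¹) ≤ (u-1)^p := by
          have h1 : (u/2)^p ≤ (u-1)^p := Real.rpow_le_rpow (by positivity) (by linarith) (by linarith)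
          have h2 : (u/2)^p = u^p / 2^p := Real.div_rpow (by positivity) (by norm_num : (0:ℝ) ≤ 2) p
          have h3 : (2:ℝ)^(p+1) = 2^p * 2 := by
            rw [Real.rpow_add (by norm_num), Real.rpow_one]
          have h2p : (0:ℝ) < (2:ℝ)^p := Real.rpow_pos_of_pos (by norm_num) p
          calc u^p * (2 * ((2:ℝ)^(p+1))⁻¹) = u^p / 2^p := by rw [h3]; field_simp
            _ = (u/2)^p := h2.symm
            _ ≤ (u-1)^p := h1
        have hB : (1 + p/2 * (u-2))^2 ≤ (u-1)^p := by
          have := bern_sq (s := u-2) (by linarith) hp (by nlinarith)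
          calc (1 + p/2*(u-2))^2 ≤ (1+(u-2))^p := this
            _ = (u-1)^p := by ring_nf
        nlinarith [mul_nonneg (mul_nonneg (show (0:ℝ) ≤ p by linarith) (show (0:ℝ) ≤ p-1 by linarith)) (sq_nonneg (u-2)), sq_nonneg (u-2), hup0]



lemma core' {p : ℝ} (hp : 2 ≤ p) (t : ℝ) :
    1 + p*t + p/8*t^2 + ((2:ℝ)^(p+1))⁻¹ * |t|^p ≤ |1+t|^p := by
  rcases le_or_gt 0 t with ht | ht
  · rw [abs_of_nonneg ht, abs_of_nonneg (by linarith : (0:ℝ) ≤ 1+t)]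
    exact core_pos hp ht
  · rw [abs_of_neg ht, show (1:ℝ)+t = 1-(-t) by ring,
      show p*t = -(p*(-t)) by ring, show t^2 = (-t)^2 by ring]
    exact core_neg hp (by linarith)

-- the key pointwise inequality
lemma key {p : ℝ} (hp : 2 ≤ p) (x δ : ℝ) :
    |x|^p + p*(|x|^(p-2)*x)*δ + p/8*|x|^(p-2)*δ^2 + ((2:ℝ)^(p+1))⁻¹ * |δ|^p
      ≤ |x+δ|^p := by
  have hb := b_le p hp
  have hb0 : 0 < ((2:ℝ)^(p+1))⁻¹ := by positivity
  -- first handle x = 0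
  rcases eq_or_ne x 0 with rfl | hx0
  · rcases eq_or_lt_of_le hp with hp2 | hp2
    · -- p = 2
      rw [← hp2]
      norm_num
      nlinarith [sq_nonneg δ]
    · have h1 : 0 ≤ |δ|^p := Real.rpow_nonneg (abs_nonneg _) p
      simp only [zero_add, abs_zero, Real.zero_rpow (show p ≠ 0 by linarith),
        Real.zero_rpow (show p - 2 ≠ 0 by linarith), mul_zero, zero_mul, add_zero,
        zero_add, zero_mul]
      nlinarith
  · -- x ≠ 0 : reduce to x > 0 by symmetry, then scale
    have main : ∀ y d : ℝ, 0 < y →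
        |y|^p + p*(|y|^(p-2)*y)*d + p/8*|y|^(p-2)*d^2 + ((2:ℝ)^(p+1))⁻¹ * |d|^p
          ≤ |y+d|^p := by
      intro y d hy
      have hyp : (0:ℝ) < y^p := Real.rpow_pos_of_pos hy p
      set t : ℝ := d/y with htd
      have hd : d = t*y := by rw [htd]; field_simp
      have habsy : |y| = y := abs_of_pos hy
      have h2 : y^(p-2) * y^2 = y^p := by
        rw [← rpow_two' y, ← Real.rpow_add hy]; norm_num
      have hcore := core' hp t
      have hmul := mul_le_mul_of_nonneg_left hcore (le_of_lt hyp)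
      -- rewrite everything
      have e1 : |y+d|^p = y^p * |1+t|^p := by
        have hyd : y + d = y*(1+t) := by rw [hd]; ring
        rw [hyd, abs_mul, abs_of_pos hy, Real.mul_rpow (le_of_lt hy) (abs_nonneg _)]
      have e4 : |d|^p = |t|^p * y^p := by
        rw [hd, abs_mul, abs_of_pos hy, Real.mul_rpow (abs_nonneg t) (le_of_lt hy)]
      rw [habsy, e1, e4, hd]
      calc y^p + p*(y^(p-2)*y)*(t*y) + p/8*y^(p-2)*(t*y)^2 + ((2:ℝ)^(p+1))⁻¹ * (|t|^p * y^p)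
          = y^p * (1 + p*t + p/8*t^2 + ((2:ℝ)^(p+1))⁻¹ * |t|^p) := by
            rw [show p*(y^(p-2)*y)*(t*y) = p*t*(y^(p-2)*y^2) by ring,
              show p/8*y^(p-2)*(t*y)^2 = p/8*t^2*(y^(p-2)*y^2) by ring, h2]
            ring
        _ ≤ y^p * |1+t|^p := hmul
    rcases lt_or_gt_of_ne hx0 with hneg | hpos
    · have := main (-x) (-δ) (by linarith)
      rw [show -x + -δ = -(x+δ) by ring, abs_neg, abs_neg, abs_neg] at this
      calc |x|^p + p*(|x|^(p-2)*x)*δ + p/8*|x|^(p-2)*δ^2 + ((2:ℝ)^(p+1))⁻¹ * |δ|^p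
          = |x|^p + p*(|x|^(p-2)*(-x))*(-δ) + p/8*|x|^(p-2)*(-δ)^2 + ((2:ℝ)^(p+1))⁻¹ * |δ|^p := by
            ring
        _ ≤ |x+δ|^p := this
    · exact main x δ hpos


-- ℓ^p ↪ ℓ^q style: sum of r-th powers vs r-th power of the sum, r ≥ 1
lemma sum_rpow_le {ι : Type*} (s : Finset ι) (f : ι → ℝ) (hf : ∀ i ∈ s, 0 ≤ f i)
    {r : ℝ} (hr : 1 ≤ r) : ∑ i ∈ s, f i ^ r ≤ (∑ i ∈ s, f i) ^ r := by
  have hr0 : 0 < r := by linarith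
  have hT : 0 ≤ ∑ i ∈ s, f i := Finset.sum_nonneg hf
  rcases eq_or_lt_of_le hT with hT0 | hT0
  · have hz : ∀ i ∈ s, f i = 0 := by
      intro i hi
      exact (Finset.sum_eq_zero_iff_of_nonneg hf).mp hT0.symm i hi
    have : ∑ i ∈ s, f i ^ r = 0 := by
      apply Finset.sum_eq_zero
      intro i hi
      rw [hz i hi, Real.zero_rpow (ne_of_gt hr0)]
    rw [this, ← hT0, Real.zero_rpow (ne_of_gt hr0)]
  · have step1 : ∑ i ∈ s, f i ^ r ≤ ∑ i ∈ s, f i * (∑ j ∈ s, f j)^(r-1) := by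
      apply Finset.sum_le_sum
      intro i hi
      rcases eq_or_lt_of_le (hf i hi) with h0 | h0
      · rw [← h0, Real.zero_rpow (ne_of_gt hr0), zero_mul]
      · have he : f i ^ r = f i * f i ^ (r-1) := by
          rw [← Real.rpow_one_add' (le_of_lt h0) (by intro h; linarith [h] : 1+(r-1) ≠ 0)]
          norm_num
        rw [he]
        apply mul_le_mul_of_nonneg_left _ (le_of_lt h0)
        exact Real.rpow_le_rpow (le_of_lt h0) (Finset.single_le_sum hf hi) (by linarith)
    have step2 : ∑ i ∈ s, f i * (∑ j ∈ s, f j)^(r-1) = (∑ i ∈ s, f i) ^ r := by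
      rw [← Finset.sum_mul, ← Real.rpow_one_add' hT (by intro h; linarith [h] : 1+(r-1) ≠ 0)]
      norm_num
    linarith

-- concavity: sum of r-th powers vs card^(1-r) * (sum)^r, 0 < r ≤ 1
lemma sum_rpow_concave {ι : Type*} (s : Finset ι) (f : ι → ℝ) (hf : ∀ i ∈ s, 0 ≤ f i)
    {r : ℝ} (hr0 : 0 < r) (hr1 : r ≤ 1) :
    ∑ i ∈ s, f i ^ r ≤ (s.card : ℝ)^(1-r) * (∑ i ∈ s, f i) ^ r := by
  have hinv : 1 ≤ 1/r := by rw [le_div_iff₀ hr0]; linarith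
  have H := Real.rpow_sum_le_const_mul_sum_rpow_of_nonneg s (f := fun i => f i ^ r) hinv
    (fun i hi => Real.rpow_nonneg (hf i hi) r)
  have hsimp : ∀ i ∈ s, (f i ^ r) ^ (1/r) = f i := by
    intro i hi
    rw [← Real.rpow_mul (hf i hi), mul_one_div, div_self (ne_of_gt hr0), Real.rpow_one]
  rw [Finset.sum_congr rfl hsimp] at H
  have hU : 0 ≤ ∑ i ∈ s, f i ^ r := Finset.sum_nonneg (fun i hi => Real.rpow_nonneg (hf i hi) r)
  have hUr : ((∑ i ∈ s, f i ^ r) ^ (1/r)) ^ r = ∑ i ∈ s, f i ^ r := by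
    rw [← Real.rpow_mul hU, one_div, inv_mul_cancel₀ (ne_of_gt hr0), Real.rpow_one]
  have hmono := Real.rpow_le_rpow (Real.rpow_nonneg hU (1/r)) H (le_of_lt hr0)
  rw [hUr] at hmono
  have hcard : (0:ℝ) ≤ (s.card : ℝ) := Nat.cast_nonneg _
  have hrw : ((s.card:ℝ) ^ (1/r - 1) * ∑ i ∈ s, f i) ^ r
      = (s.card : ℝ)^(1-r) * (∑ i ∈ s, f i) ^ r := by
    rw [Real.mul_rpow (Real.rpow_nonneg hcard _) (Finset.sum_nonneg hf),
      ← Real.rpow_mul hcard]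
    congr 2
    field_simp
  rw [hrw] at hmono
  exact hmono

-- exponential bound : 16 * p * 2^(p+1) ≤ 16^p for p ≥ 2
lemma sixteen {p : ℝ} (hp : 2 ≤ p) : 16*p*(2:ℝ)^(p+1) ≤ (16:ℝ)^p := by
  have h2 : (0:ℝ) < 2 := by norm_num
  have h16 : (16:ℝ)^p = (2:ℝ)^(4*p) := by
    rw [show (16:ℝ) = (2:ℝ)^(4:ℝ) by
      rw [show (4:ℝ) = ((4:ℕ):ℝ) by norm_num, Real.rpow_natCast]; norm_num,
      ← Real.rpow_mul (by norm_num)]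
  have hsplit : (2:ℝ)^(4*p) = (2:ℝ)^(p+1) * (2:ℝ)^(3*p-1) := by
    rw [← Real.rpow_add h2]; ring_nf
  have hkey : 16*p ≤ (2:ℝ)^(3*p-1) := by
    have e1 : (2:ℝ)^(3*p-1) = 16 * (2:ℝ)^(3*p-5) := by
      rw [show (16:ℝ) = (2:ℝ)^(4:ℝ) by
        rw [show (4:ℝ) = ((4:ℕ):ℝ) by norm_num, Real.rpow_natCast]; norm_num,
        ← Real.rpow_add h2]
      ring_nf
    have e2 : (2:ℝ)^(3*p-5) = 2 * (2:ℝ)^(3*p-6) := by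
      nth_rewrite 1 [show (3*p-5 : ℝ) = 1 + (3*p-6) by ring]
      rw [Real.rpow_add h2, Real.rpow_one]
    have e3 : 2*p - 3 ≤ (2:ℝ)^(3*p-6) := by
      rw [Real.rpow_def_of_pos h2]
      have hl : (2:ℝ)/3 ≤ Real.log 2 := by
        have := Real.log_two_gt_d9
        linarith
      have hexp := Real.add_one_le_exp (Real.log 2 * (3*p-6))
      have hx : (2/3) * (3*p-6) ≤ Real.log 2 * (3*p-6) :=
        mul_le_mul_of_nonneg_right hl (by linarith)
      nlinarith
    rw [e1, e2]
    nlinarith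
  rw [h16, hsplit]
  have hpos : (0:ℝ) < (2:ℝ)^(p+1) := Real.rpow_pos_of_pos h2 _
  calc 16*p*(2:ℝ)^(p+1) = (2:ℝ)^(p+1) * (16*p) := by ring
    _ ≤ (2:ℝ)^(p+1) * (2:ℝ)^(3*p-1) := mul_le_mul_of_nonneg_left hkey (le_of_lt hpos)

-- pointwise upper bound for res
lemma upper_pt {p : ℝ} (hp : 2 ≤ p) (x d : ℝ) :
    (|x|^(p-2)*x)*d - 2*(|x|^(p-2)*d^2) - |d|^p ≤ |x|^p := by
  have hw : 0 ≤ |x|^(p-2) := Real.rpow_nonneg (abs_nonneg x) _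
  have hdp : 0 ≤ |d|^p := Real.rpow_nonneg (abs_nonneg d) _
  have hxp : 0 ≤ |x|^p := Real.rpow_nonneg (abs_nonneg x) _
  have hq : 0 ≤ |x|^(p-2)*d^2 := mul_nonneg hw (sq_nonneg d)
  rcases eq_or_ne x 0 with rfl | hx0
  · simp only [abs_zero]
    rw [Real.zero_rpow (by linarith : p ≠ 0),
      show (0:ℝ)^(p-2)*0*d = 0 by ring]
    have hq0 : 0 ≤ (0:ℝ)^(p-2)*d^2 :=
      mul_nonneg (Real.rpow_nonneg le_rfl _) (sq_nonneg d)
    nlinarith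
  · have ha : 0 < |x| := abs_pos.mpr hx0
    have h1 : (|x|^(p-2)*x)*d ≤ |x|^(p-1) * |d| := by
      have : |x|^(p-1) = |x|^(p-2) * |x| := by
        rw [show p-1 = (p-2)+1 by ring, Real.rpow_add_one (ne_of_gt ha)]
      rw [this]
      calc (|x|^(p-2)*x)*d ≤ |(|x|^(p-2)*x)*d| := le_abs_self _
        _ = |x|^(p-2) * |x| * |d| := by
          rw [abs_mul, abs_mul, abs_of_nonneg hw]
    rcases le_total |d| |x| with hdx | hdx
    · have h2 : |x|^(p-1) * |d| ≤ |x|^(p-1) * |x| :=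
        mul_le_mul_of_nonneg_left hdx (Real.rpow_nonneg (abs_nonneg x) _)
      have h3 : |x|^(p-1) * |x| = |x|^p := by
        rw [← Real.rpow_add_one (ne_of_gt ha)]; norm_num
      nlinarith
    · have h2 : |x|^(p-1) ≤ |d|^(p-1) :=
        Real.rpow_le_rpow (abs_nonneg x) hdx (by linarith)
      have h3 : |d|^(p-1) * |d| = |d|^p := by
        rcases eq_or_lt_of_le (abs_nonneg d) with h0 | h0
        · rw [← h0, Real.zero_rpow (by linarith : p-1 ≠ 0), Real.zero_rpow (by linarith : p ≠ 0)]
          ring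
        · rw [← Real.rpow_add_one (ne_of_gt h0)]; norm_num
      have h4 : |x|^(p-1) * |d| ≤ |d|^p := by
        rw [← h3]
        exact mul_le_mul_of_nonneg_right h2 (abs_nonneg d)
      nlinarith




set_option maxHeartbeats 1000000 in
/-- Lemma B.7, BinarySearchSmall, case `p < q`. -/
theorem stmt_9 :
    ∃ c : ℝ, 0 < c ∧
      ∀ (n m : ℕ) (p q : ℝ), 2 ≤ p → p < q →
        ∀ (C α : ℝ), 1 ≤ C → 1 < α →
          ∀ (A : Matrix (Fin n) (Fin m) ℝ) (b : Fin n → ℝ) (x₀ xs : Fin m → ℝ),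
            A.mulVec x₀ = b →
            (∀ x, A.mulVec x = b → (∑ e, |x₀ e| ^ q) ≤ C * ∑ e, |x e| ^ q) →
            A.mulVec xs = b →
            (∀ x, A.mulVec x = b → (∑ e, |xs e| ^ p) ≤ ∑ e, |x e| ^ p) →
            α * (∑ e, |xs e| ^ p) < (∑ e, |x₀ e| ^ p) →
            c * (α - 1) * (∑ e, |x₀ e| ^ p) / (C ^ (p / q) * p * (m : ℝ))
              ≤ sSup {y | ∃ Δ : Fin m → ℝ, A.mulVec Δ = 0 ∧
                  y = res (fun e => |x₀ e| ^ (p - 2) * x₀ e) (fun e => |x₀ e| ^ (p - 2)) p Δ} ∧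
            sSup {y | ∃ Δ : Fin m → ℝ, A.mulVec Δ = 0 ∧
                  y = res (fun e => |x₀ e| ^ (p - 2) * x₀ e) (fun e => |x₀ e| ^ (p - 2)) p Δ}
              ≤ ∑ e, |x₀ e| ^ p := by
  refine ⟨1/16, by norm_num, ?_⟩
  intro n m p q hp hpq C α hC hα A b x₀ xs hx₀b hqopt hxsb hpopt hlt
  have hp0 : (0:ℝ) < p := by linarith
  have hq0 : (0:ℝ) < q := by linarith
  have hC0 : (0:ℝ) < C := by linarith
  rcases Nat.eq_zero_or_pos m with rfl | hm
  · exfalso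
    simp only [Finset.univ_eq_empty, Finset.sum_empty, mul_zero] at hlt
    exact lt_irrefl 0 hlt
  have hm1 : (1:ℝ) ≤ (m:ℝ) := by exact_mod_cast hm
  have hm0 : (0:ℝ) < (m:ℝ) := by linarith
  set g : Fin m → ℝ := fun e => |x₀ e| ^ (p - 2) * x₀ e with hg
  set w : Fin m → ℝ := fun e => |x₀ e| ^ (p - 2) with hw
  set f₀ : ℝ := ∑ e, |x₀ e| ^ p with hf₀
  set fs : ℝ := ∑ e, |xs e| ^ p with hfs
  set S : Set ℝ := {y | ∃ Δ : Fin m → ℝ, A.mulVec Δ = 0 ∧ y = res g w p Δ} with hS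
  have hfs0 : 0 ≤ fs := Finset.sum_nonneg fun e _ => Real.rpow_nonneg (abs_nonneg _) p
  have hf₀pos : 0 < f₀ := lt_of_le_of_lt (by positivity) hlt
  -- upper bound on every element of S
  have hub : ∀ y ∈ S, y ≤ f₀ := by
    rintro y ⟨Δ, hΔ, rfl⟩
    rw [res, hf₀, Finset.mul_sum, ← Finset.sum_sub_distrib, ← Finset.sum_sub_distrib]
    apply Finset.sum_le_sum
    intro e _
    simpa [hg, hw] using upper_pt hp (x₀ e) (Δ e)
  have hbdd : BddAbove S := ⟨f₀, hub⟩
  -- the norm-comparison: f₀ ≤ m * C^(p/q) * fs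
  have hr0 : 0 < p/q := by positivity
  have hr1 : p/q ≤ 1 := by rw [div_le_one hq0]; linarith
  have hqp1 : 1 ≤ q/p := by rw [le_div_iff₀ hp0]; linarith
  have hA1 : (∑ e, |xs e| ^ q) ≤ fs ^ (q/p) := by
    have h := sum_rpow_le Finset.univ (fun e => |xs e| ^ p)
      (fun e _ => Real.rpow_nonneg (abs_nonneg _) p) hqp1
    have hL : ∀ e : Fin m, (|xs e| ^ p) ^ (q/p) = |xs e| ^ q := fun e => by
      rw [← Real.rpow_mul (abs_nonneg (xs e)), show p*(q/p) = q by field_simp]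
    simp only [hL] at h
    exact h
  have hA2 : f₀ ≤ (m:ℝ)^(1-p/q) * (∑ e, |x₀ e| ^ q) ^ (p/q) := by
    have h := sum_rpow_concave Finset.univ (fun e => |x₀ e| ^ q)
      (fun e _ => Real.rpow_nonneg (abs_nonneg _) q) hr0 hr1
    simp only [Finset.card_univ, Fintype.card_fin] at h
    have hL : ∀ e : Fin m, (|x₀ e| ^ q) ^ (p/q) = |x₀ e| ^ p := fun e => by
      rw [← Real.rpow_mul (abs_nonneg (x₀ e)), show q*(p/q) = p by field_simp]
    simp only [hL] at h
    exact h
  have hq_sum_nonneg : 0 ≤ ∑ e, |xs e| ^ q :=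
    Finset.sum_nonneg fun e _ => Real.rpow_nonneg (abs_nonneg _) q
  have hchain : f₀ ≤ (m:ℝ) * C^(p/q) * fs := by
    have s1 : (∑ e, |x₀ e| ^ q) ^ (p/q) ≤ (C * ∑ e, |xs e| ^ q) ^ (p/q) :=
      Real.rpow_le_rpow (Finset.sum_nonneg fun e _ => Real.rpow_nonneg (abs_nonneg _) q)
        (hqopt xs hxsb) (le_of_lt hr0)
    have s2 : (C * ∑ e, |xs e| ^ q) ^ (p/q) = C^(p/q) * (∑ e, |xs e| ^ q) ^ (p/q) :=
      Real.mul_rpow (le_of_lt hC0) hq_sum_nonneg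
    have s3 : (∑ e, |xs e| ^ q) ^ (p/q) ≤ (fs ^ (q/p)) ^ (p/q) :=
      Real.rpow_le_rpow hq_sum_nonneg hA1 (le_of_lt hr0)
    have s4 : (fs ^ (q/p)) ^ (p/q) = fs := by
      rw [← Real.rpow_mul hfs0]
      rw [show q/p*(p/q) = 1 by field_simp, Real.rpow_one]
    have s5 : (m:ℝ)^(1-p/q) ≤ (m:ℝ) := by
      calc (m:ℝ)^(1-p/q) ≤ (m:ℝ)^(1:ℝ) :=
            Real.rpow_le_rpow_of_exponent_le hm1 (by linarith)
        _ = (m:ℝ) := Real.rpow_one _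
    have hmr : 0 ≤ (m:ℝ)^(1-p/q) := Real.rpow_nonneg (le_of_lt hm0) _
    have hCr : 0 ≤ C^(p/q) := Real.rpow_nonneg (le_of_lt hC0) _
    calc f₀ ≤ (m:ℝ)^(1-p/q) * (∑ e, |x₀ e| ^ q) ^ (p/q) := hA2
      _ ≤ (m:ℝ)^(1-p/q) * (C^(p/q) * (∑ e, |xs e| ^ q) ^ (p/q)) := by
          rw [← s2]; exact mul_le_mul_of_nonneg_left s1 hmr
      _ ≤ (m:ℝ)^(1-p/q) * (C^(p/q) * fs) := by
          rw [← s4]; exact mul_le_mul_of_nonneg_left (mul_le_mul_of_nonneg_left s3 hCr) hmr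
      _ = (m:ℝ)^(1-p/q) * (C^(p/q) * fs) := rfl
      _ ≤ (m:ℝ) * C^(p/q) * fs := by
          rw [mul_assoc]
          exact mul_le_mul_of_nonneg_right s5 (mul_nonneg hCr hfs0)
  have hfs_pos : 0 < fs := by
    rcases eq_or_lt_of_le hfs0 with h0 | h0
    · exfalso; rw [← h0] at hchain; simp at hchain; linarith
    · exact h0
  have hαK : α < (m:ℝ) * C^(p/q) := by
    have := lt_of_lt_of_le hlt hchain
    exact lt_of_mul_lt_mul_right this (le_of_lt hfs_pos)
  have hfs_lt : fs < f₀ := by nlinarith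
  -- the improvement direction
  set d : Fin m → ℝ := fun e => x₀ e - xs e with hd
  set G : ℝ := ∑ e, g e * d e with hG
  set R : ℝ := ∑ e, w e * (d e)^2 with hR
  set P : ℝ := ∑ e, |d e| ^ p with hP
  have hR0 : 0 ≤ R := Finset.sum_nonneg fun e _ =>
    mul_nonneg (Real.rpow_nonneg (abs_nonneg _) _) (sq_nonneg _)
  have hP0 : 0 ≤ P := Finset.sum_nonneg fun e _ => Real.rpow_nonneg (abs_nonneg _) p
  have hb0 : (0:ℝ) < ((2:ℝ)^(p+1))⁻¹ := by positivity
  have hkey_e : ∀ e, |x₀ e|^p - p*(g e * d e) + p/8*(w e * (d e)^2)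
      + ((2:ℝ)^(p+1))⁻¹ * |d e|^p ≤ |xs e|^p := by
    intro e
    have h := key hp (x₀ e) (xs e - x₀ e)
    rw [show x₀ e + (xs e - x₀ e) = xs e by ring] at h
    have e1 : p*(|x₀ e|^(p-2)*x₀ e)*(xs e - x₀ e) = -(p*(g e * d e)) := by
      simp only [hg, hd]; ring
    have e2 : p/8*|x₀ e|^(p-2)*(xs e - x₀ e)^2 = p/8*(w e * (d e)^2) := by
      simp only [hw, hd]; ring
    have e3 : |xs e - x₀ e| = |d e| := by
      simp only [hd]; rw [← abs_neg]; congr 1; ring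
    rw [e1, e2, e3] at h
    linarith
  have hsum : f₀ - p*G + p/8*R + ((2:ℝ)^(p+1))⁻¹*P ≤ fs := by
    have h := Finset.sum_le_sum (fun e (_ : e ∈ Finset.univ) => hkey_e e)
    have heq : ∑ e, (|x₀ e|^p - p*(g e * d e) + p/8*(w e * (d e)^2)
        + ((2:ℝ)^(p+1))⁻¹ * |d e|^p)
        = f₀ - p*G + p/8*R + ((2:ℝ)^(p+1))⁻¹*P := by
      rw [Finset.sum_add_distrib, Finset.sum_add_distrib, Finset.sum_sub_distrib,
        ← Finset.mul_sum, ← Finset.mul_sum, ← Finset.mul_sum]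
    rw [heq] at h
    exact h
  -- the witness Δ
  have hAd : A.mulVec (fun e => d e / 16) = 0 := by
    have h1 : A.mulVec (x₀ - xs) = 0 := by
      rw [Matrix.mulVec_sub, hx₀b, hxsb, sub_self]
    have h2 : (fun e => d e / 16) = (16:ℝ)⁻¹ • (x₀ - xs) := by
      funext e
      simp only [hd, Pi.smul_apply, Pi.sub_apply, smul_eq_mul]
      ring
    rw [h2, Matrix.mulVec_smul, h1, smul_zero]
  have hmem : res g w p (fun e => d e / 16) ∈ S := ⟨fun e => d e / 16, hAd, rfl⟩
  have h16pp : (0:ℝ) < (16:ℝ)^p := Real.rpow_pos_of_pos (by norm_num) p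
  have hres_eq : res g w p (fun e => d e / 16)
      = G/16 - 2*(R/256) - P/(16:ℝ)^p := by
    have t1 : (∑ e, g e * (d e / 16)) = G/16 := by
      rw [hG, Finset.sum_div]
      exact Finset.sum_congr rfl fun e _ => by ring
    have t2 : (∑ e, w e * (d e / 16)^2) = R/256 := by
      rw [hR, Finset.sum_div]
      exact Finset.sum_congr rfl fun e _ => by ring
    have t3 : (∑ e, |d e / 16| ^ p) = P/(16:ℝ)^p := by
      rw [hP, Finset.sum_div]
      refine Finset.sum_congr rfl fun e _ => ?_
      rw [show |d e / 16| = |d e| / 16 by rw [abs_div]; norm_num,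
        Real.div_rpow (abs_nonneg _) (by norm_num)]
    rw [res]
    simp only [t1, t2, t3]
  have hres_lower : (f₀ - fs)/(16*p) ≤ res g w p (fun e => d e / 16) := by
    rw [hres_eq]
    have hG16 : (f₀ - fs)/(16*p) + R/128 + ((2:ℝ)^(p+1))⁻¹*P/(16*p) ≤ G/16 := by
      have h1 : ((f₀-fs) + p/8*R + ((2:ℝ)^(p+1))⁻¹*P)/(16*p) ≤ (p*G)/(16*p) := by
        apply div_le_div_of_nonneg_right _ (by positivity)
        linarith
      have h2 : ((f₀-fs) + p/8*R + ((2:ℝ)^(p+1))⁻¹*P)/(16*p)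
          = (f₀ - fs)/(16*p) + R/128 + ((2:ℝ)^(p+1))⁻¹*P/(16*p) := by
        field_simp
        ring
      have h3 : (p*G)/(16*p) = G/16 := by
        field_simp
      linarith [h1]
    have hq2 : P/(16:ℝ)^p ≤ ((2:ℝ)^(p+1))⁻¹*P/(16*p) := by
      have hb16 : 16*p ≤ ((2:ℝ)^(p+1))⁻¹*(16:ℝ)^p := by
        rw [inv_mul_eq_div, le_div_iff₀ (by positivity)]
        calc 16*p*(2:ℝ)^(p+1) = 16*p*(2:ℝ)^(p+1) := rfl
          _ ≤ (16:ℝ)^p := sixteen hp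
      rw [div_le_div_iff₀ h16pp (by positivity)]
      calc P * (16*p) ≤ P * (((2:ℝ)^(p+1))⁻¹*(16:ℝ)^p) :=
            mul_le_mul_of_nonneg_left hb16 hP0
        _ = ((2:ℝ)^(p+1))⁻¹*P*(16:ℝ)^p := by ring
    linarith
  constructor
  · -- lower bound on sSup
    have hstep : 1/16*(α-1)*f₀/(C^(p/q)*p*(m:ℝ)) ≤ (f₀-fs)/(16*p) := by
      rw [div_le_div_iff₀ (by positivity) (by positivity)]
      have hKD : (α-1)*f₀ ≤ ((m:ℝ)*C^(p/q))*(f₀-fs) := by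
        nlinarith [mul_le_mul_of_nonneg_right (le_of_lt hαK) (le_of_lt (sub_pos.mpr hfs_lt))]
      nlinarith [mul_le_mul_of_nonneg_right hKD (le_of_lt hp0)]
    calc 1/16*(α-1)*f₀/(C^(p/q)*p*(m:ℝ)) ≤ (f₀-fs)/(16*p) := hstep
      _ ≤ res g w p (fun e => d e / 16) := hres_lower
      _ ≤ sSup S := le_csSup hbdd hmem
  · exact Real.sSup_le hub (le_of_lt hf₀pos)
end
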